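/- Let Ω ⊂ ℝ^d be a bounded open set, T, S > 0, G = Ω × (0,T) × (0,S), Ξ¹ = cl(Ω) × [0,S]. Let a : ℝ → ℝ and φ₁, …, φ_d : ℝ → ℝ be continuously differentiable, let ε ∈ (0,1], and let Z : cl(G) × ℝ → ℝ be continuous with λ·Z(x,t,s,λ) ≤ b₁λ² + b₂ for all (x,t,s) ∈ G and λ ∈ ℝ, where b₁, b₂ ≥ 0. Let u₀⁽¹⁾ : Ξ¹ → ℝ and u₀⁽²⁾, u_S⁽²⁾ : cl(Ω) × [0,T] → ℝ be bounded and continuous. Suppose u is a classical solution of the regularized problem with diffusion parameter ε, source Z, and data u₀⁽¹⁾, u₀⁽²⁾, u_S⁽²⁾. Then for every t' ∈ (0,T] and every ξ > b₁, sup_{cl(Ω)×[0,t']×[0,S]} |u| ≤ e^{ξ t'}·max{ sup_{Ξ¹}|u₀⁽¹⁾|, sup_{cl(Ω)×[0,t']}|u₀⁽²⁾|, sup_{cl(Ω)×[0,t']}|u_S⁽²⁾|, √(b₂/(ξ−b₁)) }. -/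

import Mathlib

open MeasureTheory

open Set Filter Topology

/-- At a maximum over `[0, τ]` attained at an interior-from-the-left point `t₀ > 0`,
the (full) derivative is nonnegative. -/
lemma deriv_nonneg_of_left_max {g : ℝ → ℝ} {c t₀ τ : ℝ} (h0 : 0 < t₀) (hτ : t₀ ≤ τ)
    (hg : HasDerivAt g c t₀) (hmax : ∀ t ∈ Set.Icc (0:ℝ) τ, g t ≤ g t₀) : 0 ≤ c := by
  have h := hg.hasDerivWithinAt (s := Set.Iio t₀)
  rw [hasDerivWithinAt_iff_tendsto_slope,
    Set.diff_singleton_eq_self (by simp : t₀ ∉ Set.Iio t₀)] at h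
  refine ge_of_tendsto h ?_
  filter_upwards [(eventually_gt_nhds h0).filter_mono nhdsWithin_le_nhds,
    self_mem_nhdsWithin] with t h0t hlt
  have hgle : g t ≤ g t₀ := hmax t ⟨h0t.le, (le_of_lt hlt).trans hτ⟩
  have hts : t - t₀ < 0 := sub_neg.mpr hlt
  rw [slope_def_field]
  exact div_nonneg_of_nonpos (by linarith) hts.le

/-- Second-derivative necessary condition at a local maximum. -/
lemma second_deriv_nonpos_of_isLocalMax {f f' : ℝ → ℝ} {a c : ℝ}
    (hf : ∀ᶠ x in 𝓝 a, HasDerivAt f (f' x) x)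
    (hmax : IsLocalMax f a) (hc : HasDerivAt f' c a) : c ≤ 0 := by
  by_contra hpos
  push_neg at hpos
  have hfa : f' a = 0 := hmax.hasDerivAt_eq_zero hf.self_of_nhds
  have hslope := hc.hasDerivWithinAt (s := Set.Ioi a)
  rw [hasDerivWithinAt_iff_tendsto_slope,
    Set.diff_singleton_eq_self (by simp : a ∉ Set.Ioi a)] at hslope
  have h1 : ∀ᶠ x in 𝓝[>] a, 0 < f' x := by
    filter_upwards [hslope.eventually (eventually_gt_nhds hpos), self_mem_nhdsWithin]
      with x hx hxa
    rw [slope_def_field, hfa, sub_zero] at hx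
    have hxa' : 0 < x - a := sub_pos.mpr hxa
    have := mul_pos hx hxa'
    rwa [div_mul_cancel₀ _ hxa'.ne'] at this
  have h2 : ∀ᶠ x in 𝓝[>] a, f x ≤ f a := hmax.filter_mono nhdsWithin_le_nhds
  have h3 : ∀ᶠ x in 𝓝[>] a, HasDerivAt f (f' x) x := hf.filter_mono nhdsWithin_le_nhds
  obtain ⟨V, hV, hVsub⟩ := (h1.and (h3.and h2)).exists_mem
  obtain ⟨b, hab, hsub⟩ := mem_nhdsGT_iff_exists_Ioc_subset.mp hV
  have hab' : a < b := hab
  have hcont : ContinuousOn f (Set.Icc a b) := by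
    intro y hy
    rcases eq_or_lt_of_le hy.1 with rfl | hlt
    · exact hf.self_of_nhds.continuousAt.continuousWithinAt
    · exact ((hVsub _ (hsub ⟨hlt, hy.2⟩)).2.1).continuousAt.continuousWithinAt
  have hmono : StrictMonoOn f (Set.Icc a b) := by
    apply strictMonoOn_of_deriv_pos (convex_Icc a b) hcont
    intro y hy
    rw [interior_Icc] at hy
    have hy' := hVsub _ (hsub ⟨hy.1, hy.2.le⟩)
    rw [hy'.2.1.deriv]
    exact hy'.1
  have hlt : f a < f b := hmono ⟨le_rfl, hab'.le⟩ ⟨hab'.le, le_rfl⟩ hab'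
  have hle : f b ≤ f a := (hVsub _ (hsub ⟨hab', le_rfl⟩)).2.2
  linarith

/-- Combination: if `f` is `C²` on an open set around `a` and `σ • f` has a local max at `a`,
then `σ * f''(a) ≤ 0`. -/
lemma sigma_second_deriv_nonpos {f : ℝ → ℝ} {U : Set ℝ} (hU : IsOpen U) {a σ : ℝ} (ha : a ∈ U)
    (hf : ContDiffOn ℝ 2 f U) (hmax : IsLocalMax (fun r => σ * f r) a) :
    σ * deriv (deriv f) a ≤ 0 := by
  have hd : ∀ᶠ x in 𝓝 a, HasDerivAt f (deriv f x) x := by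
    filter_upwards [hU.mem_nhds ha] with y hy
    exact ((hf.differentiableOn (by norm_num) y hy).differentiableAt (hU.mem_nhds hy)).hasDerivAt
  have h2 : HasDerivAt (deriv f) (deriv (deriv f) a) a := by
    have h1 : ContDiffOn ℝ 1 (deriv f) U := hf.deriv_of_isOpen hU (by norm_num)
    exact ((h1.differentiableOn one_ne_zero a ha).differentiableAt (hU.mem_nhds ha)).hasDerivAt
  exact second_deriv_nonpos_of_isLocalMax
    (f' := fun r => σ * deriv f r)
    (hd.mono fun x hx => hx.const_mul σ) hmax (h2.const_mul σ)


/-- A classical solution of the regularized problem `Π_{γε}` on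
`G = Ω × (0,T) × (0,S)` with diffusion parameter `ε` and source `Z`:
`u` is continuous on `cl G`, its first-order partial derivatives extend continuously to `cl G`,
it is twice continuously differentiable in `(x, s)` (and once in `t`) on `G`, it satisfies the
quasi-linear parabolic equation
`∂ₜu + ∂ₛ(a(u)) + div_x φ(u) = Δₓu + ε ∂²ₛₛu + Z(x,t,s,u)` on `G`, together with the initial
condition `u|_{t=0} = u₀⁽¹⁾`, initial/final conditions `u|_{s=0} = u₀⁽²⁾`, `u|_{s=S} = u_S⁽²⁾`,
and the homogeneous lateral boundary condition `u|_{∂Ω} = 0`. -/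
structure IsClassicalSolution (d : ℕ) (Ω : Set (Fin d → ℝ)) (T S ε : ℝ)
    (a : ℝ → ℝ) (φ : Fin d → ℝ → ℝ) (Z : (Fin d → ℝ) → ℝ → ℝ → ℝ → ℝ)
    (u01 : (Fin d → ℝ) → ℝ → ℝ) (u02 uS2 : (Fin d → ℝ) → ℝ → ℝ)
    (u : (Fin d → ℝ) → ℝ → ℝ → ℝ) : Prop where
  cont : ContinuousOn (fun p : (Fin d → ℝ) × ℝ × ℝ => u p.1 p.2.1 p.2.2)
      ((closure Ω) ×ˢ (Set.Icc 0 T ×ˢ Set.Icc 0 S))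
  deriv_t_ext : ∃ Dt : (Fin d → ℝ) × ℝ × ℝ → ℝ,
      ContinuousOn Dt ((closure Ω) ×ˢ (Set.Icc 0 T ×ˢ Set.Icc 0 S)) ∧
      ∀ x ∈ Ω, ∀ t ∈ Set.Ioo 0 T, ∀ s ∈ Set.Ioo 0 S,
        HasDerivAt (fun t' => u x t' s) (Dt (x, t, s)) t
  deriv_s_ext : ∃ Ds : (Fin d → ℝ) × ℝ × ℝ → ℝ,
      ContinuousOn Ds ((closure Ω) ×ˢ (Set.Icc 0 T ×ˢ Set.Icc 0 S)) ∧
      ∀ x ∈ Ω, ∀ t ∈ Set.Ioo 0 T, ∀ s ∈ Set.Ioo 0 S,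
        HasDerivAt (fun s' => u x t s') (Ds (x, t, s)) s
  deriv_x_ext : ∀ i : Fin d, ∃ Dxi : (Fin d → ℝ) × ℝ × ℝ → ℝ,
      ContinuousOn Dxi ((closure Ω) ×ˢ (Set.Icc 0 T ×ˢ Set.Icc 0 S)) ∧
      ∀ x ∈ Ω, ∀ t ∈ Set.Ioo 0 T, ∀ s ∈ Set.Ioo 0 S,
        HasDerivAt (fun r => u (Function.update x i r) t s) (Dxi (x, t, s)) (x i)
  contDiff_xs : ∀ t ∈ Set.Ioo 0 T,
      ContDiffOn ℝ 2 (fun q : (Fin d → ℝ) × ℝ => u q.1 t q.2) (Ω ×ˢ Set.Ioo 0 S)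
  pde : ∀ x ∈ Ω, ∀ t ∈ Set.Ioo 0 T, ∀ s ∈ Set.Ioo 0 S,
      deriv (fun t' => u x t' s) t + deriv (fun s' => a (u x t s')) s +
          ∑ i : Fin d, deriv (fun r => φ i (u (Function.update x i r) t s)) (x i) =
        (∑ i : Fin d,
            deriv (fun r => deriv (fun r' => u (Function.update x i r') t s) r) (x i)) +
          ε * deriv (fun s1 => deriv (fun s2 => u x t s2) s1) s + Z x t s (u x t s)
  init : ∀ x ∈ closure Ω, ∀ s ∈ Set.Icc 0 S, u x 0 s = u01 x s
  bc_zero : ∀ x ∈ closure Ω, ∀ t ∈ Set.Icc 0 T, u x t 0 = u02 x t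
  bc_S : ∀ x ∈ closure Ω, ∀ t ∈ Set.Icc 0 T, u x t S = uS2 x t
  lateral : ∀ x ∈ frontier Ω, ∀ t ∈ Set.Icc 0 T, ∀ s ∈ Set.Icc 0 S, u x t s = 0

set_option maxHeartbeats 1600000 in
/-- Maximum principle (2.3) of Proposition 2.1 for classical solutions of the regularized
problem with a source satisfying the quadratic growth condition. -/
theorem maximum_principle_regularized (d : ℕ) (Ω : Set (Fin d → ℝ))
    (hΩo : IsOpen Ω) (hΩb : Bornology.IsBounded Ω)
    (T S : ℝ) (hT : 0 < T) (hS : 0 < S)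
    (a : ℝ → ℝ) (φ : Fin d → ℝ → ℝ) (ha : ContDiff ℝ 1 a) (hφ : ∀ i, ContDiff ℝ 1 (φ i))
    (ε : ℝ) (hε : ε ∈ Set.Ioc (0 : ℝ) 1)
    (Z : (Fin d → ℝ) → ℝ → ℝ → ℝ → ℝ)
    (hZc : ContinuousOn (fun q : ((Fin d → ℝ) × ℝ × ℝ) × ℝ => Z q.1.1 q.1.2.1 q.1.2.2 q.2)
        (((closure Ω) ×ˢ (Set.Icc 0 T ×ˢ Set.Icc 0 S)) ×ˢ (Set.univ : Set ℝ)))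
    (b₁ b₂ : ℝ) (hb₁ : 0 ≤ b₁) (hb₂ : 0 ≤ b₂)
    (hZg : ∀ x ∈ Ω, ∀ t ∈ Set.Ioo 0 T, ∀ s ∈ Set.Ioo 0 S, ∀ l : ℝ,
        l * Z x t s l ≤ b₁ * l ^ 2 + b₂)
    (u01 u02 uS2 : (Fin d → ℝ) → ℝ → ℝ)
    (hu01c : ContinuousOn (fun p : (Fin d → ℝ) × ℝ => u01 p.1 p.2)
        ((closure Ω) ×ˢ Set.Icc 0 S))
    (hu01b : ∃ C : ℝ, ∀ x ∈ closure Ω, ∀ s ∈ Set.Icc 0 S, |u01 x s| ≤ C)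
    (hu02c : ContinuousOn (fun p : (Fin d → ℝ) × ℝ => u02 p.1 p.2)
        ((closure Ω) ×ˢ Set.Icc 0 T))
    (hu02b : ∃ C : ℝ, ∀ x ∈ closure Ω, ∀ t ∈ Set.Icc 0 T, |u02 x t| ≤ C)
    (huS2c : ContinuousOn (fun p : (Fin d → ℝ) × ℝ => uS2 p.1 p.2)
        ((closure Ω) ×ˢ Set.Icc 0 T))
    (huS2b : ∃ C : ℝ, ∀ x ∈ closure Ω, ∀ t ∈ Set.Icc 0 T, |uS2 x t| ≤ C)
    (u : (Fin d → ℝ) → ℝ → ℝ → ℝ)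
    (hu : IsClassicalSolution d Ω T S ε a φ Z u01 u02 uS2 u)
    (t' : ℝ) (ht' : t' ∈ Set.Ioc 0 T) (ξ : ℝ) (hξ : b₁ < ξ) :
    ∀ x ∈ closure Ω, ∀ t ∈ Set.Icc 0 t', ∀ s ∈ Set.Icc 0 S,
      |u x t s| ≤ Real.exp (ξ * t') *
        max (max
            (sSup ((fun p : (Fin d → ℝ) × ℝ => |u01 p.1 p.2|) '' ((closure Ω) ×ˢ Set.Icc 0 S)))
            (sSup ((fun p : (Fin d → ℝ) × ℝ => |u02 p.1 p.2|) '' ((closure Ω) ×ˢ Set.Icc 0 t'))))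
          (max
            (sSup ((fun p : (Fin d → ℝ) × ℝ => |uS2 p.1 p.2|) '' ((closure Ω) ×ˢ Set.Icc 0 t')))
            (Real.sqrt (b₂ / (ξ - b₁)))) := by
  
  intro x hx t ht s hs
  obtain ⟨Dt, hDtc, hDt⟩ := hu.deriv_t_ext
  obtain ⟨Ds, hDsc, hDs⟩ := hu.deriv_s_ext
  choose Dx hDxc hDx using hu.deriv_x_ext
  have hξ0 : 0 < ξ := lt_of_le_of_lt hb₁ hξ
  have hsq0 : 0 ≤ b₂ / (ξ - b₁) := div_nonneg hb₂ (sub_pos.mpr hξ).le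
  set M1 := sSup ((fun p : (Fin d → ℝ) × ℝ => |u01 p.1 p.2|) '' ((closure Ω) ×ˢ Set.Icc 0 S))
    with hM1def
  set M2 := sSup ((fun p : (Fin d → ℝ) × ℝ => |u02 p.1 p.2|) '' ((closure Ω) ×ˢ Set.Icc 0 t'))
    with hM2def
  set M3 := sSup ((fun p : (Fin d → ℝ) × ℝ => |uS2 p.1 p.2|) '' ((closure Ω) ×ˢ Set.Icc 0 t'))
    with hM3def
  set M : ℝ := max (max M1 M2) (max M3 (Real.sqrt (b₂ / (ξ - b₁)))) with hMdef
  have hM0 : 0 ≤ M := (Real.sqrt_nonneg _).trans ((le_max_right M3 _).trans (le_max_right _ _))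
  have hM1le : ∀ x' ∈ closure Ω, ∀ s' ∈ Set.Icc (0:ℝ) S, |u01 x' s'| ≤ M1 := by
    obtain ⟨C, hC⟩ := hu01b
    intro x' hx' s' hs'
    exact le_csSup ⟨C, by rintro y ⟨p, ⟨hp1, hp2⟩, rfl⟩; exact hC p.1 hp1 p.2 hp2⟩
      ⟨(x', s'), ⟨hx', hs'⟩, rfl⟩
  have hM2le : ∀ x' ∈ closure Ω, ∀ t2 ∈ Set.Icc (0:ℝ) t', |u02 x' t2| ≤ M2 := by
    obtain ⟨C, hC⟩ := hu02b
    intro x' hx' t2 ht2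
    apply le_csSup
    · refine ⟨C, ?_⟩
      rintro y ⟨p, ⟨hp1, hp2⟩, rfl⟩
      exact hC p.1 hp1 p.2 ⟨hp2.1, hp2.2.trans ht'.2⟩
    · exact ⟨(x', t2), ⟨hx', ht2⟩, rfl⟩
  have hM3le : ∀ x' ∈ closure Ω, ∀ t2 ∈ Set.Icc (0:ℝ) t', |uS2 x' t2| ≤ M3 := by
    obtain ⟨C, hC⟩ := huS2b
    intro x' hx' t2 ht2
    apply le_csSup
    · refine ⟨C, ?_⟩
      rintro y ⟨p, ⟨hp1, hp2⟩, rfl⟩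
      exact hC p.1 hp1 p.2 ⟨hp2.1, hp2.2.trans ht'.2⟩
    · exact ⟨(x', t2), ⟨hx', ht2⟩, rfl⟩
  -- Main claim: for τ < T the exponentially weighted sup is at most M.
  have MAIN : ∀ τ, 0 < τ → τ ≤ t' → τ < T →
      ∀ x₁ ∈ closure Ω, ∀ t₁ ∈ Set.Icc 0 τ, ∀ s₁ ∈ Set.Icc 0 S,
      Real.exp (-ξ * t₁) * |u x₁ t₁ s₁| ≤ M := by
    intro τ hτ0 hτt' hτT x₁ hx₁ t₁ ht₁ s₁ hs₁
    set K : Set ((Fin d → ℝ) × ℝ × ℝ) := (closure Ω) ×ˢ (Set.Icc 0 τ ×ˢ Set.Icc 0 S) with hKdef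
    have hKsub : K ⊆ (closure Ω) ×ˢ (Set.Icc 0 T ×ˢ Set.Icc 0 S) :=
      Set.prod_mono_right (Set.prod_mono_left (Set.Icc_subset_Icc_right hτT.le))
    have hKc : IsCompact K :=
      hΩb.isCompact_closure.prod (isCompact_Icc.prod isCompact_Icc)
    have hKne : K.Nonempty := ⟨(x₁, 0, 0), hx₁, ⟨le_rfl, hτ0.le⟩, ⟨le_rfl, hS.le⟩⟩
    have hFc : ContinuousOn (fun p : ((Fin d → ℝ) × ℝ × ℝ) =>
        Real.exp (-ξ * p.2.1) * |u p.1 p.2.1 p.2.2|) K :=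
      ((Real.continuous_exp.comp (continuous_const.mul continuous_snd.fst)).continuousOn).mul
        ((hu.cont.mono hKsub).abs)
    obtain ⟨p₀, hp₀K, hp₀max'⟩ := hKc.exists_isMaxOn hKne hFc
    obtain ⟨x₀, t₀, s₀⟩ := p₀
    have hp₀max : ∀ p ∈ K, Real.exp (-ξ * p.2.1) * |u p.1 p.2.1 p.2.2| ≤
        Real.exp (-ξ * t₀) * |u x₀ t₀ s₀| := fun p hp => hp₀max' hp
    have hx₀ : x₀ ∈ closure Ω := hp₀K.1
    have ht₀ : t₀ ∈ Set.Icc 0 τ := hp₀K.2.1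
    have hs₀ : s₀ ∈ Set.Icc 0 S := hp₀K.2.2
    suffices hFM : Real.exp (-ξ * t₀) * |u x₀ t₀ s₀| ≤ M by
      calc Real.exp (-ξ * t₁) * |u x₁ t₁ s₁|
          ≤ Real.exp (-ξ * t₀) * |u x₀ t₀ s₀| := hp₀max (x₁, t₁, s₁) ⟨hx₁, ht₁, hs₁⟩
        _ ≤ M := hFM
    by_contra hcon
    push_neg at hcon
    have ht₀T : t₀ ∈ Set.Icc (0:ℝ) T := ⟨ht₀.1, ht₀.2.trans hτT.le⟩
    -- x₀ is interior
    have hx₀Ω : x₀ ∈ Ω := by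
      by_contra h
      have hfr : x₀ ∈ frontier Ω := by
        rw [hΩo.frontier_eq]; exact ⟨hx₀, h⟩
      have hz := hu.lateral x₀ hfr t₀ ht₀T s₀ hs₀
      have hzz : Real.exp (-ξ * t₀) * |u x₀ t₀ s₀| = 0 := by simp [hz]
      rw [hzz] at hcon; linarith
    have hexp1 : Real.exp (-ξ * t₀) ≤ 1 :=
      Real.exp_le_one_iff.mpr (by nlinarith [ht₀.1])
    -- t₀ > 0
    have ht₀0 : 0 < t₀ := by
      rcases eq_or_lt_of_le ht₀.1 with h | h
      · exfalso
        have hval : Real.exp (-ξ * t₀) * |u x₀ t₀ s₀| = |u01 x₀ s₀| := by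
          rw [← h, hu.init x₀ hx₀ s₀ hs₀]; simp
        rw [hval] at hcon
        have := hM1le x₀ hx₀ s₀ hs₀
        have hM1M : M1 ≤ M := (le_max_left M1 M2).trans (le_max_left _ _)
        linarith
      · exact h
    -- s₀ interior
    have hs₀0 : 0 < s₀ := by
      rcases eq_or_lt_of_le hs₀.1 with h | h
      · exfalso
        have hval : Real.exp (-ξ * t₀) * |u x₀ t₀ s₀| =
            Real.exp (-ξ * t₀) * |u02 x₀ t₀| := by
          rw [← h, hu.bc_zero x₀ hx₀ t₀ ht₀T]
        rw [hval] at hcon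
        have h2 := hM2le x₀ hx₀ t₀ ⟨ht₀.1, ht₀.2.trans hτt'⟩
        have hM2M : M2 ≤ M := (le_max_right M1 M2).trans (le_max_left _ _)
        nlinarith [abs_nonneg (u02 x₀ t₀), Real.exp_pos (-ξ * t₀)]
      · exact h
    have hs₀S : s₀ < S := by
      rcases eq_or_lt_of_le hs₀.2 with h | h
      · exfalso
        have hval : Real.exp (-ξ * t₀) * |u x₀ t₀ s₀| =
            Real.exp (-ξ * t₀) * |uS2 x₀ t₀| := by
          rw [h, hu.bc_S x₀ hx₀ t₀ ht₀T]
        rw [hval] at hcon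
        have h2 := hM3le x₀ hx₀ t₀ ⟨ht₀.1, ht₀.2.trans hτt'⟩
        have hM3M : M3 ≤ M := (le_max_left M3 _).trans (le_max_right _ _)
        nlinarith [abs_nonneg (uS2 x₀ t₀), Real.exp_pos (-ξ * t₀)]
      · exact h
    have ht₀mem : t₀ ∈ Set.Ioo (0:ℝ) T := ⟨ht₀0, lt_of_le_of_lt ht₀.2 hτT⟩
    have hs₀mem : s₀ ∈ Set.Ioo (0:ℝ) S := ⟨hs₀0, hs₀S⟩
    set l := u x₀ t₀ s₀ with hldef
    set σ : ℝ := if 0 ≤ l then 1 else -1 with hσdef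
    have hσl : σ * l = |l| := by
      rw [hσdef]; split_ifs with h
      · rw [one_mul, abs_of_nonneg h]
      · rw [abs_of_neg (not_le.mp h)]; ring
    have hσabsl : σ * |l| = l := by
      rw [hσdef]; split_ifs with h
      · rw [one_mul, abs_of_nonneg h]
      · rw [abs_of_neg (not_le.mp h)]; ring
    have hσne : σ ≠ 0 := by rw [hσdef]; split_ifs <;> norm_num
    -- bound of σ • u by σ • l on K
    have hKbound : ∀ x₂ t₂ s₂, (x₂, t₂, s₂) ∈ K → σ * u x₂ t₂ s₂ ≤ |u x₂ t₂ s₂| ∧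
        Real.exp (-ξ * t₂) * |u x₂ t₂ s₂| ≤ Real.exp (-ξ * t₀) * |l| := by
      intro x₂ t₂ s₂ hmem
      refine ⟨?_, hp₀max (x₂, t₂, s₂) hmem⟩
      calc σ * u x₂ t₂ s₂ ≤ |σ * u x₂ t₂ s₂| := le_abs_self _
        _ = |u x₂ t₂ s₂| := by
            rw [abs_mul, hσdef]; split_ifs <;> simp
    -- same-time bound: |u x₂ t₀ s₂| ≤ |l|
    have hKb0 : ∀ x₂ s₂, x₂ ∈ closure Ω → s₂ ∈ Set.Icc 0 S →
        σ * u x₂ t₀ s₂ ≤ σ * u x₀ t₀ s₀ := by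
      intro x₂ s₂ hx₂ hs₂
      obtain ⟨h1, h2⟩ := hKbound x₂ t₀ s₂ ⟨hx₂, ht₀, hs₂⟩
      have h3 := (mul_le_mul_iff_right₀ (Real.exp_pos (-ξ * t₀))).mp h2
      have h4 : σ * u x₀ t₀ s₀ = |l| := by rw [← hσl, hldef]
      linarith
    -- local max in s-direction
    have hsmax : IsLocalMax (fun s' => σ * u x₀ t₀ s') s₀ := by
      filter_upwards [isOpen_Ioo.mem_nhds hs₀mem] with s' hs'
      exact hKb0 x₀ s' hx₀ ⟨hs'.1.le, hs'.2.le⟩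
    -- derivative in s vanishes
    have hDs0 : Ds (x₀, t₀, s₀) = 0 := by
      have h := (hDs x₀ hx₀Ω t₀ ht₀mem s₀ hs₀mem).const_mul σ
      have h0 := hsmax.hasDerivAt_eq_zero h
      exact (mul_eq_zero.mp h0).resolve_left hσne
    -- local max in each x-direction
    have hcupd : ∀ i : Fin d, Continuous (Function.update x₀ i) :=
      fun i => (contDiff_update (𝕜 := ℝ) (F' := fun _ : Fin d => ℝ) 2 x₀ i).continuous
    have hxmax : ∀ i : Fin d, IsLocalMax (fun r => σ * u (Function.update x₀ i r) t₀ s₀) (x₀ i) := by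
      intro i
      have hUopen : IsOpen ((Function.update x₀ i) ⁻¹' Ω) := hΩo.preimage (hcupd i)
      have hUmem : x₀ i ∈ (Function.update x₀ i) ⁻¹' Ω := by
        simp only [Set.mem_preimage, Function.update_eq_self]; exact hx₀Ω
      filter_upwards [hUopen.mem_nhds hUmem] with r hr
      have : σ * u (Function.update x₀ i r) t₀ s₀ ≤ σ * l :=
        hKb0 _ s₀ (subset_closure hr) hs₀
      simpa [Function.update_eq_self] using this
    -- derivatives in x vanish
    have hDx0 : ∀ i : Fin d, Dx i (x₀, t₀, s₀) = 0 := by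
      intro i
      have h := (hDx i x₀ hx₀Ω t₀ ht₀mem s₀ hs₀mem).const_mul σ
      have h0 := (hxmax i).hasDerivAt_eq_zero h
      exact (mul_eq_zero.mp h0).resolve_left hσne
    -- C² regularity along lines
    have hC2 := hu.contDiff_xs t₀ ht₀mem
    have hC2s : ContDiffOn ℝ 2 (fun s' => u x₀ t₀ s') (Set.Ioo 0 S) := by
      have hι : ContDiff ℝ 2 (fun s' : ℝ => ((x₀, s') : (Fin d → ℝ) × ℝ)) :=
        contDiff_const.prodMk contDiff_id
      exact hC2.comp hι.contDiffOn (fun s' hs' => ⟨hx₀Ω, hs'⟩)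
    have hYσ : σ * deriv (fun s1 => deriv (fun s2 => u x₀ t₀ s2) s1) s₀ ≤ 0 :=
      sigma_second_deriv_nonpos isOpen_Ioo hs₀mem hC2s hsmax
    have hXσ : ∀ i : Fin d,
        σ * deriv (fun r => deriv (fun r' => u (Function.update x₀ i r') t₀ s₀) r) (x₀ i) ≤ 0 := by
      intro i
      have hι : ContDiff ℝ 2 (fun r : ℝ => ((Function.update x₀ i r, s₀) : (Fin d → ℝ) × ℝ)) :=
        (contDiff_update (𝕜 := ℝ) (F' := fun _ : Fin d => ℝ) 2 x₀ i).prodMk contDiff_const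
      set U : Set ℝ := (fun r : ℝ => ((Function.update x₀ i r, s₀) : (Fin d → ℝ) × ℝ)) ⁻¹'
        (Ω ×ˢ Set.Ioo 0 S) with hUdef
      have hUopen : IsOpen U := (hΩo.prod isOpen_Ioo).preimage hι.continuous
      have hUmem : x₀ i ∈ U := by
        simp only [hUdef, Set.mem_preimage, Function.update_eq_self]
        exact Set.mk_mem_prod hx₀Ω hs₀mem
      have hC2i : ContDiffOn ℝ 2 (fun r => u (Function.update x₀ i r) t₀ s₀) U :=
        hC2.comp hι.contDiffOn (fun r hr => hr)
      exact sigma_second_deriv_nonpos hUopen hUmem hC2i (hxmax i)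
    -- time derivative inequality
    have hgt : HasDerivAt (fun t1 => Real.exp (-ξ * t1) * (σ * u x₀ t1 s₀))
        (Real.exp (-ξ * t₀) * (-ξ * 1) * (σ * l) +
          Real.exp (-ξ * t₀) * (σ * Dt (x₀, t₀, s₀))) t₀ := by
      have h1 : HasDerivAt (fun t1 : ℝ => Real.exp (-ξ * t1))
          (Real.exp (-ξ * t₀) * (-ξ * 1)) t₀ :=
        ((hasDerivAt_id t₀).const_mul (-ξ)).exp
      have h2 := (hDt x₀ hx₀Ω t₀ ht₀mem s₀ hs₀mem).const_mul σ
      exact h1.mul h2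
    have hgmax : ∀ t2 ∈ Set.Icc (0:ℝ) τ,
        Real.exp (-ξ * t2) * (σ * u x₀ t2 s₀) ≤ Real.exp (-ξ * t₀) * (σ * u x₀ t₀ s₀) := by
      intro t2 ht2
      obtain ⟨h1, h2⟩ := hKbound x₀ t2 s₀ ⟨hx₀, ht2, hs₀⟩
      have e2 := Real.exp_pos (-ξ * t2)
      calc Real.exp (-ξ * t2) * (σ * u x₀ t2 s₀)
          ≤ Real.exp (-ξ * t2) * |u x₀ t2 s₀| := mul_le_mul_of_nonneg_left h1 e2.le
        _ ≤ Real.exp (-ξ * t₀) * |l| := h2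
        _ = Real.exp (-ξ * t₀) * (σ * u x₀ t₀ s₀) := by rw [hσl]
    have htime : ξ * |l| ≤ σ * Dt (x₀, t₀, s₀) := by
      have h0 := deriv_nonneg_of_left_max ht₀0 ht₀.2 hgt hgmax
      have hexp := Real.exp_pos (-ξ * t₀)
      have heq : Real.exp (-ξ * t₀) * (-ξ * 1) * (σ * l) +
          Real.exp (-ξ * t₀) * (σ * Dt (x₀, t₀, s₀)) =
          Real.exp (-ξ * t₀) * (σ * Dt (x₀, t₀, s₀) - ξ * (σ * l)) := by ring
      rw [heq] at h0
      have h2 : 0 ≤ σ * Dt (x₀, t₀, s₀) - ξ * (σ * l) := by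
        by_contra hneg
        push_neg at hneg
        nlinarith
      rw [hσl] at h2
      linarith
    -- assemble PDE
    have hpde := hu.pde x₀ hx₀Ω t₀ ht₀mem s₀ hs₀mem
    have hDtd : deriv (fun t2 => u x₀ t2 s₀) t₀ = Dt (x₀, t₀, s₀) :=
      (hDt x₀ hx₀Ω t₀ ht₀mem s₀ hs₀mem).deriv
    have hAd : deriv (fun s' => a (u x₀ t₀ s')) s₀ = 0 := by
      have hin := hDs x₀ hx₀Ω t₀ ht₀mem s₀ hs₀mem
      have ha' : HasDerivAt a (deriv a (u x₀ t₀ s₀)) (u x₀ t₀ s₀) :=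
        ((ha.differentiable one_ne_zero) (u x₀ t₀ s₀)).hasDerivAt
      have hcomp := ha'.comp s₀ hin
      rw [Function.comp_def] at hcomp
      rw [hcomp.deriv, hDs0, mul_zero]
    have hPhid : ∑ i : Fin d,
        deriv (fun r => φ i (u (Function.update x₀ i r) t₀ s₀)) (x₀ i) = 0 := by
      refine Finset.sum_eq_zero fun i _ => ?_
      have hin := hDx i x₀ hx₀Ω t₀ ht₀mem s₀ hs₀mem
      have hφ' : HasDerivAt (φ i)
          (deriv (φ i) (u (Function.update x₀ i (x₀ i)) t₀ s₀))
          (u (Function.update x₀ i (x₀ i)) t₀ s₀) :=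
        (((hφ i).differentiable one_ne_zero) _).hasDerivAt
      have hcomp := hφ'.comp (x₀ i) hin
      rw [Function.comp_def] at hcomp
      rw [hcomp.deriv, hDx0 i, mul_zero]
    rw [hDtd, hAd, hPhid, add_zero, add_zero] at hpde
    rw [← hldef] at hpde
    -- multiply PDE by σ and use sign information
    have hsum : σ * (∑ i : Fin d,
        deriv (fun r => deriv (fun r' => u (Function.update x₀ i r') t₀ s₀) r) (x₀ i)) ≤ 0 := by
      rw [Finset.mul_sum]
      exact Finset.sum_nonpos fun i _ => hXσ i
    have hεY : ε * (σ * deriv (fun s1 => deriv (fun s2 => u x₀ t₀ s2) s1) s₀) ≤ 0 :=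
      mul_nonpos_of_nonneg_of_nonpos hε.1.le hYσ
    have hmul : σ * Dt (x₀, t₀, s₀) =
        σ * (∑ i : Fin d,
          deriv (fun r => deriv (fun r' => u (Function.update x₀ i r') t₀ s₀) r) (x₀ i)) +
        ε * (σ * deriv (fun s1 => deriv (fun s2 => u x₀ t₀ s2) s1) s₀) +
        σ * Z x₀ t₀ s₀ l := by rw [hpde]; ring
    have hfin : ξ * |l| ≤ σ * Z x₀ t₀ s₀ l := by linarith
    -- quadratic growth
    have hZb := hZg x₀ hx₀Ω t₀ ht₀mem s₀ hs₀mem l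
    have hquad : ξ * l ^ 2 ≤ b₁ * l ^ 2 + b₂ := by
      have h1 := mul_le_mul_of_nonneg_left hfin (abs_nonneg l)
      have h2 : |l| * (σ * Z x₀ t₀ s₀ l) = l * Z x₀ t₀ s₀ l := by
        rw [← mul_assoc, mul_comm (|l|) σ, hσabsl]
      have h3 : |l| * (ξ * |l|) = ξ * l ^ 2 := by
        rw [show |l| * (ξ * |l|) = ξ * (|l| * |l|) by ring, abs_mul_abs_self, sq]
      rw [h2, h3] at h1
      linarith
    have hl2 : l ^ 2 ≤ b₂ / (ξ - b₁) := by
      rw [le_div_iff₀ (sub_pos.mpr hξ)]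
      nlinarith
    have hlsqrt : |l| ≤ Real.sqrt (b₂ / (ξ - b₁)) := by
      rw [Real.le_sqrt (abs_nonneg l) hsq0, sq_abs]
      exact hl2
    have hfinal : Real.exp (-ξ * t₀) * |l| ≤ M := by
      calc Real.exp (-ξ * t₀) * |l| ≤ |l| :=
            mul_le_of_le_one_left (abs_nonneg l) hexp1
        _ ≤ Real.sqrt (b₂ / (ξ - b₁)) := hlsqrt
        _ ≤ M := (le_max_right M3 _).trans (le_max_right _ _)
    linarith
  -- derive the final bound from MAIN
  have key : ∀ t₁ ∈ Set.Icc (0:ℝ) t', t₁ < T → ∀ s₁ ∈ Set.Icc (0:ℝ) S,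
      |u x t₁ s₁| ≤ Real.exp (ξ * t') * M := by
    intro t₁ ht₁ ht₁T s₁ hs₁
    rcases lt_or_ge t' T with hc | hc
    · have h := MAIN t' ht'.1 le_rfl hc x hx t₁ ht₁ s₁ hs₁
      have e1 : Real.exp (ξ * t₁) * Real.exp (-ξ * t₁) = 1 := by
        rw [← Real.exp_add, show ξ * t₁ + -ξ * t₁ = 0 by ring, Real.exp_zero]
      have e2 : Real.exp (ξ * t₁) ≤ Real.exp (ξ * t') :=
        Real.exp_le_exp.mpr (mul_le_mul_of_nonneg_left ht₁.2 hξ0.le)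
      calc |u x t₁ s₁| = Real.exp (ξ * t₁) * (Real.exp (-ξ * t₁) * |u x t₁ s₁|) := by
            rw [← mul_assoc, e1, one_mul]
        _ ≤ Real.exp (ξ * t₁) * M :=
            mul_le_mul_of_nonneg_left h (Real.exp_pos _).le
        _ ≤ Real.exp (ξ * t') * M := mul_le_mul_of_nonneg_right e2 hM0
    · -- t' = T essentially; use τ = max t₁ (T/2) < T
      set τ : ℝ := max t₁ (T / 2) with hτdef
      have hτ0 : 0 < τ := lt_of_lt_of_le (half_pos hT) (le_max_right _ _)
      have hτT : τ < T := max_lt ht₁T (half_lt_self hT)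
      have hτt' : τ ≤ t' := le_trans hτT.le hc
      have h := MAIN τ hτ0 hτt' hτT x hx t₁ ⟨ht₁.1, le_max_left _ _⟩ s₁ hs₁
      have e1 : Real.exp (ξ * t₁) * Real.exp (-ξ * t₁) = 1 := by
        rw [← Real.exp_add, show ξ * t₁ + -ξ * t₁ = 0 by ring, Real.exp_zero]
      have e2 : Real.exp (ξ * t₁) ≤ Real.exp (ξ * t') :=
        Real.exp_le_exp.mpr (mul_le_mul_of_nonneg_left ht₁.2 hξ0.le)
      calc |u x t₁ s₁| = Real.exp (ξ * t₁) * (Real.exp (-ξ * t₁) * |u x t₁ s₁|) := by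
            rw [← mul_assoc, e1, one_mul]
        _ ≤ Real.exp (ξ * t₁) * M :=
            mul_le_mul_of_nonneg_left h (Real.exp_pos _).le
        _ ≤ Real.exp (ξ * t') * M := mul_le_mul_of_nonneg_right e2 hM0
  rcases lt_or_ge t T with htT | htT
  · exact key t ht htT s hs
  · -- t = T (since t ≤ t' ≤ T)
    have htT' : t = T := le_antisymm (ht.2.trans ht'.2) htT
    have hTt' : T ≤ t' := htT' ▸ ht.2
    have hcont : ContinuousWithinAt (fun r => |u x r s|) (Set.Ioo 0 T) T := by
      have h1 : ContinuousWithinAt (fun p : (Fin d → ℝ) × ℝ × ℝ => u p.1 p.2.1 p.2.2)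
          ((closure Ω) ×ˢ (Set.Icc 0 T ×ˢ Set.Icc 0 S)) (x, T, s) :=
        hu.cont (x, T, s) ⟨hx, ⟨hT.le, le_rfl⟩, hs⟩
      have h2 : ContinuousWithinAt (fun r : ℝ => ((x, r, s) : (Fin d → ℝ) × ℝ × ℝ))
          (Set.Ioo 0 T) T :=
        (Continuous.continuousWithinAt (by continuity))
      have h3 : Set.MapsTo (fun r : ℝ => ((x, r, s) : (Fin d → ℝ) × ℝ × ℝ))
          (Set.Ioo 0 T) ((closure Ω) ×ˢ (Set.Icc 0 T ×ˢ Set.Icc 0 S)) :=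
        fun r hr => ⟨hx, ⟨hr.1.le, hr.2.le⟩, hs⟩
      exact (ContinuousWithinAt.comp (f := fun r : ℝ => ((x, r, s) : (Fin d → ℝ) × ℝ × ℝ))
        h1 h2 h3).abs
    have hne : (𝓝[Set.Ioo (0:ℝ) T] T).NeBot := by
      rw [← mem_closure_iff_nhdsWithin_neBot, closure_Ioo hT.ne]
      exact ⟨hT.le, le_rfl⟩
    haveI := hne
    have hgoal : |u x T s| ≤ Real.exp (ξ * t') * M := by
      refine le_of_tendsto (hcont.tendsto) ?_
      filter_upwards [self_mem_nhdsWithin] with r hr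
      exact key r ⟨hr.1.le, hr.2.le.trans hTt'⟩ hr.2 s hs
    rw [htT']
    exact hgoal
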